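/- Let q = 2^m with m ≥ 1, K a finite field with q² elements, and a, b, c, d ∈ K satisfying d ≠ 0, d^q·b ≠ a·c^q, d^q·c ≠ a·b^q, d^{q+1} = a^{q+1}, and −(d^q·c − a·b^q)³ = (d^q·b − a·c^q)·[(b^{q+1} − c^{q+1})·(d^q·c − a·b^q) + (b·d^q − a·c^q)·(d·c^q − a^q·b)]. Then the rational function g = (d^q·X³ + c^q·X² + b^q·X + a^q)/(a·X³ + b·X² + c·X + d) does not permute μ_{q+1}. -/

import Mathlib

open Polynomial

open scoped Classical

/-- The denominator polynomial `D(X) = a·X³ + b·X² + c·X + d`. -/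
noncomputable def Dpoly {K : Type*} [Field K] (a b c d : K) : K[X] :=
  C a * X ^ 3 + C b * X ^ 2 + C c * X + C d

/-- The numerator polynomial `N(X) = d^q·X³ + c^q·X² + b^q·X + a^q`. -/
noncomputable def Npoly {K : Type*} [Field K] (q : ℕ) (a b c d : K) : K[X] :=
  C (d ^ q) * X ^ 3 + C (c ^ q) * X ^ 2 + C (b ^ q) * X + C (a ^ q)

/-- Numerator of `g = N/D` in lowest terms. -/
noncomputable def numer₀ {K : Type*} [Field K] (q : ℕ) (a b c d : K) : K[X] :=
  Npoly q a b c d / EuclideanDomain.gcd (Npoly q a b c d) (Dpoly a b c d)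

/-- Denominator of `g = N/D` in lowest terms. -/
noncomputable def denom₀ {K : Type*} [Field K] (q : ℕ) (a b c d : K) : K[X] :=
  Dpoly a b c d / EuclideanDomain.gcd (Npoly q a b c d) (Dpoly a b c d)

/-- The degree of the rational function `g = N/D`. -/
noncomputable def gDeg {K : Type*} [Field K] (q : ℕ) (a b c d : K) : ℕ :=
  max (numer₀ q a b c d).natDegree (denom₀ q a b c d).natDegree

/-- `μ_{q+1} = {x ∈ K : x^{q+1} = 1}`. -/
def mu (q : ℕ) (K : Type*) [Monoid K] : Set K := {x : K | x ^ (q + 1) = 1}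

/-- `g` permutes `μ_{q+1}`: the map `x ↦ N₀(x)·D₀(x)⁻¹` is a bijection of `μ_{q+1}`. -/
def gPermutes (q : ℕ) {K : Type*} [Field K] (a b c d : K) : Prop :=
  Set.BijOn (fun x => (numer₀ q a b c d).eval x * ((denom₀ q a b c d).eval x)⁻¹)
    (mu q K) (mu q K)

set_option maxHeartbeats 1600000 in
/-- Section 4.2, Case (iii): in characteristic 2, under the
listed coefficient conditions, `g` does not permute `μ_{q+1}`. -/
theorem stmt18 {K : Type*} [Field K] [Fintype K] (m q : ℕ)
    (hm : 1 ≤ m) (hq : q = 2 ^ m) (hK : Fintype.card K = q ^ 2) (a b c d : K)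
    (hd : d ≠ 0) (h1 : d ^ q * b ≠ a * c ^ q) (h2 : d ^ q * c ≠ a * b ^ q)
    (h3 : d ^ (q + 1) = a ^ (q + 1))
    (h4 : -(d ^ q * c - a * b ^ q) ^ 3 =
        (d ^ q * b - a * c ^ q) *
          ((b ^ (q + 1) - c ^ (q + 1)) * (d ^ q * c - a * b ^ q) +
           (b * d ^ q - a * c ^ q) * (d * c ^ q - a ^ q * b))) :
    ¬ gPermutes q a b c d := by
  intro hperm
  have hperm' := hperm
  unfold gPermutes at hperm'
  -- basic numeric facts
  have hq2 : 2 ≤ q := by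
    rw [hq]
    calc 2 = 2 ^ 1 := by norm_num
    _ ≤ 2 ^ m := Nat.pow_le_pow_right (by norm_num) hm
  have hq0 : q ≠ 0 := by omega
  have hq10 : q + 1 ≠ 0 := by omega
  -- characteristic 2
  have htwo : (2 : K) = 0 := by
    have h := FiniteField.cast_card_eq_zero K
    rw [hK] at h
    push_cast at h
    have hqK : (q : K) = 0 := by
      exact pow_eq_zero_iff (n := 2) (by norm_num) |>.mp h
    rw [hq] at hqK
    push_cast at hqK
    exact pow_eq_zero_iff (by omega) |>.mp hqK
  have hchar2 : ringChar K = 2 := by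
    have hdvd : ringChar K ∣ 2 := ringChar.dvd (by exact_mod_cast htwo)
    have hne1 : ringChar K ≠ 1 := CharP.char_ne_one K _
    rcases (Nat.prime_two.eq_one_or_self_of_dvd _ hdvd) with h | h
    · exact absurd h hne1
    · exact h
  haveI : CharP K 2 := ringChar.of_eq hchar2
  haveI : Fact (Nat.Prime 2) := ⟨Nat.prime_two⟩
  have frob : ∀ x y : K, (x + y) ^ q = x ^ q + y ^ q := by
    intro x y; rw [hq]; exact add_pow_char_pow ..
  have frobsub : ∀ x y : K, (x - y) ^ q = x ^ q - y ^ q := by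
    intro x y; rw [hq]; exact sub_pow_char_pow ..
  have hfr : ∀ x : K, x ^ q ^ 2 = x := by
    intro x; rw [← hK]; exact FiniteField.pow_card x
  have hfr2 : ∀ x : K, (x ^ q) ^ q = x := by
    intro x; rw [← pow_mul, ← pow_two]; exact hfr x
  -- nonzeroness
  have ha : a ≠ 0 := by
    intro h
    rw [h] at h3
    simp only [zero_pow hq10] at h3
    exact hd (pow_eq_zero_iff hq10 |>.mp h3)
  have hBne : d ^ q * b - a * c ^ q ≠ 0 := sub_ne_zero.mpr h1
  have hEne : d ^ q * c - a * b ^ q ≠ 0 := sub_ne_zero.mpr h2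
  have hdq : d ^ q ≠ 0 := pow_ne_zero _ hd
  -- the common root r
  have key : a * (d ^ q * c - a * b ^ q) ^ 3
      + b * (d ^ q * c - a * b ^ q) ^ 2 * (d ^ q * b - a * c ^ q)
      + c * (d ^ q * c - a * b ^ q) * (d ^ q * b - a * c ^ q) ^ 2
      + d * (d ^ q * b - a * c ^ q) ^ 3 = 0 := by
    linear_combination (-a) * h4 + (b^3*(d^q)^2 + a^2*b*(c^q)^2) * h3 +
      (b^2*c^2*(d^q)^3 - a*b*c^2*(c^q)*(d^q)^2 - 2*a*b^2*d*(c^q)*(d^q)^2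
        - 2*a*b^2*c*(b^q)*(d^q)^2 + a*b^3*(a^q)*(d^q)^2 + 2*a^2*b*d*(c^q)^2*(d^q)
        + 2*a^2*b*c*(b^q)*(c^q)*(d^q) + a^2*b^2*(b^q)^2*(d^q)
        - a^2*b^2*(a^q)*(c^q)*(d^q) - a^3*d*(c^q)^3 - a^3*b*(b^q)^2*(c^q)
        + a^3*b*(a^q)*(c^q)^2) * htwo
  obtain ⟨r, hrBE⟩ : ∃ r : K, (d ^ q * b - a * c ^ q) * r = d ^ q * c - a * b ^ q :=
    ⟨(d ^ q * c - a * b ^ q) / (d ^ q * b - a * c ^ q), by field_simp⟩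
  have hr0 : r ≠ 0 := by
    intro h; apply hEne; rw [← hrBE, h, mul_zero]
  have hDr : a * r ^ 3 + b * r ^ 2 + c * r + d = 0 := by
    have h' : (d ^ q * b - a * c ^ q) ^ 3 * (a * r ^ 3 + b * r ^ 2 + c * r + d) = 0 := by
      linear_combination (a * (((d ^ q * b - a * c ^ q) * r) ^ 2
          + ((d ^ q * b - a * c ^ q) * r) * (d ^ q * c - a * b ^ q)
          + (d ^ q * c - a * b ^ q) ^ 2)
        + b * (d ^ q * b - a * c ^ q) * ((d ^ q * b - a * c ^ q) * r + (d ^ q * c - a * b ^ q))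
        + c * (d ^ q * b - a * c ^ q) ^ 2) * hrBE + key
    exact (mul_eq_zero.mp h').resolve_left (pow_ne_zero 3 hBne)
  have hNr : d ^ q * r ^ 3 + c ^ q * r ^ 2 + b ^ q * r + a ^ q = 0 := by
    have h' : a * (d ^ q * r ^ 3 + c ^ q * r ^ 2 + b ^ q * r + a ^ q) = 0 := by
      linear_combination (d ^ q) * hDr - h3 - r * hrBE - ((d ^ q * c - a * b ^ q) * r) * htwo
    exact (mul_eq_zero.mp h').resolve_left ha
  -- r is in mu
  have hE2 : (d ^ q * c - a * b ^ q) ^ q = d * c ^ q - a ^ q * b := by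
    rw [frobsub, mul_pow, mul_pow, hfr2 d, hfr2 b]
  have hB2 : (d ^ q * b - a * c ^ q) ^ q = d * b ^ q - a ^ q * c := by
    rw [frobsub, mul_pow, mul_pow, hfr2 d, hfr2 c]
  have h6 : ((d * c ^ q - a ^ q * b) * r + (d * b ^ q - a ^ q * c)) * r = 0 := by
    linear_combination d * hNr - a ^ q * hDr - r ^ 3 * h3
  have h7 : (d * c ^ q - a ^ q * b) * r + (d * b ^ q - a ^ q * c) = 0 :=
    (mul_eq_zero.mp h6).resolve_right hr0
  have h5 : (d ^ q * c - a * b ^ q) ^ q * (d ^ q * c - a * b ^ q)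
      + (d ^ q * b - a * c ^ q) ^ q * (d ^ q * b - a * c ^ q) = 0 := by
    rw [hE2, hB2]
    linear_combination (d ^ q * b - a * c ^ q) * h7 - (d * c ^ q - a ^ q * b) * hrBE
  have hrq : (d ^ q * b - a * c ^ q) ^ q * r ^ q = (d ^ q * c - a * b ^ q) ^ q := by
    rw [← mul_pow, hrBE]
  have hrmu : r ^ (q + 1) = 1 := by
    have h10 : ((d ^ q * b - a * c ^ q) ^ q * (d ^ q * b - a * c ^ q)) * r ^ (q + 1)
        = ((d ^ q * b - a * c ^ q) ^ q * (d ^ q * b - a * c ^ q)) * 1 := by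
      rw [pow_succ, mul_one]
      linear_combination ((d ^ q * b - a * c ^ q) * r) * hrq
        + (d ^ q * c - a * b ^ q) ^ q * hrBE - h5
        + ((d ^ q * c - a * b ^ q) ^ q * (d ^ q * c - a * b ^ q)) * htwo
    exact mul_left_cancel₀ (mul_ne_zero (pow_ne_zero q hBne) hBne) h10
  -- evaluation lemmas
  have hNeval : ∀ x : K, (Npoly q a b c d).eval x
      = d ^ q * x ^ 3 + c ^ q * x ^ 2 + b ^ q * x + a ^ q := by
    intro x; simp [Npoly]
  have hDeval : ∀ x : K, (Dpoly a b c d).eval x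
      = a * x ^ 3 + b * x ^ 2 + c * x + d := by
    intro x; simp [Dpoly]
  -- the gcd has degree 1 with root r
  set G : K[X] := EuclideanDomain.gcd (Npoly q a b c d) (Dpoly a b c d) with hGdef
  have hNp0 : Npoly q a b c d ≠ 0 := by
    intro h
    have h3' : (Npoly q a b c d).coeff 3 = d ^ q := by
      simp only [Npoly, coeff_add, coeff_C_mul, coeff_X_pow, coeff_X, coeff_C]
      norm_num
    rw [h] at h3'
    simp at h3'
    exact hdq h3'.symm
  have htwoP : (2 : K[X]) = 0 := by
    rw [show (2 : K[X]) = C 2 from (map_ofNat C 2).symm, htwo, map_zero]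
  have hcomb : C (d ^ q) * Dpoly a b c d - C a * Npoly q a b c d
      = C (d ^ q * b - a * c ^ q) * (X * (X - C r)) := by
    have hrBEC : ((C d) ^ q * C b - C a * (C c) ^ q) * C r
        = (C d) ^ q * C c - C a * (C b) ^ q := by
      have := congrArg (Polynomial.C (R := K)) hrBE
      simpa only [map_mul, map_sub, map_pow] using this
    have h3C : (C d : K[X]) ^ (q + 1) = (C a) ^ (q + 1) := by
      have := congrArg (Polynomial.C (R := K)) h3
      simpa only [map_pow] using this
    simp only [Dpoly, Npoly, map_sub, map_mul, map_pow]
    linear_combination (X : K[X]) * hrBEC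
      + (((C d : K[X])) ^ q * C c - C a * (C b) ^ q) * X * htwoP + h3C
  have hGdvd : G ∣ C (d ^ q * b - a * c ^ q) * (X * (X - C r)) := by
    rw [← hcomb]
    exact dvd_sub ((EuclideanDomain.gcd_dvd_right _ _).mul_left _)
      ((EuclideanDomain.gcd_dvd_left _ _).mul_left _)
  have hXndvd : ¬ (X ∣ G) := by
    intro h
    have hXD : X ∣ Dpoly a b c d := h.trans (EuclideanDomain.gcd_dvd_right _ _)
    have := X_dvd_iff.mp hXD
    rw [Polynomial.coeff_zero_eq_eval_zero, hDeval 0] at this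
    simp at this
    exact hd this
  have hG0ne : G.coeff 0 ≠ 0 := fun h => hXndvd (X_dvd_iff.mpr h)
  have hcopXG : IsCoprime (X : K[X]) G := by
    obtain ⟨H1, hH1⟩ : (X : K[X]) ∣ (G - C (G.coeff 0)) := by
      apply X_dvd_iff.mpr
      simp [coeff_sub, coeff_C]
    refine ⟨-(C (G.coeff 0)⁻¹) * H1, C (G.coeff 0)⁻¹, ?_⟩
    have hG0 : G = X * H1 + C (G.coeff 0) := by linear_combination hH1
    have hCinv : C (G.coeff 0)⁻¹ * C (G.coeff 0) = (1 : K[X]) := by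
      rw [← C_mul, inv_mul_cancel₀ hG0ne, C_1]
    linear_combination (C (G.coeff 0)⁻¹) * hG0 + hCinv
  have hXrG : (X - C r) ∣ G := by
    apply EuclideanDomain.dvd_gcd
    · exact dvd_iff_isRoot.mpr (by rw [IsRoot, hNeval]; exact hNr)
    · exact dvd_iff_isRoot.mpr (by rw [IsRoot, hDeval]; exact hDr)
  have hG3 : G ∣ C (d ^ q * b - a * c ^ q) * (X - C r) := by
    apply (hcopXG.symm).dvd_of_dvd_mul_left
    rw [show (X : K[X]) * (C (d ^ q * b - a * c ^ q) * (X - C r))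
      = C (d ^ q * b - a * c ^ q) * (X * (X - C r)) from by ring]
    exact hGdvd
  obtain ⟨Hp, hHp⟩ := hXrG
  have hHpBv : Hp ∣ C (d ^ q * b - a * c ^ q) := by
    have h' : (X - C r) * Hp ∣ (X - C r) * C (d ^ q * b - a * c ^ q) := by
      rw [← hHp]
      rw [show (X - C r) * C (d ^ q * b - a * c ^ q)
        = C (d ^ q * b - a * c ^ q) * (X - C r) from mul_comm _ _]
      exact hG3
    exact (mul_dvd_mul_iff_left (X_sub_C_ne_zero r)).mp h'
  have hHpdeg : Hp.natDegree = 0 := by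
    have h' := Polynomial.natDegree_le_of_dvd hHpBv (Polynomial.C_ne_zero.mpr hBne)
    exact Nat.le_zero.mp (le_trans h' (le_of_eq (Polynomial.natDegree_C _)))
  have hHpC : Hp = C (Hp.coeff 0) := Polynomial.eq_C_of_natDegree_eq_zero hHpdeg
  have hGne : G ≠ 0 := by
    intro h
    rw [hGdef] at h
    exact hNp0 (EuclideanDomain.gcd_eq_zero_iff.mp h).1
  have hh0 : Hp.coeff 0 ≠ 0 := by
    intro h
    apply hGne
    rw [hHp, hHpC, h, map_zero, mul_zero]
  -- cofactors
  set Nqp : K[X] := C (d ^ q) * X ^ 2 + C (c ^ q + d ^ q * r) * X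
    + C (b ^ q + c ^ q * r + d ^ q * r ^ 2) with hNqpdef
  set Dqp : K[X] := C a * X ^ 2 + C (b + a * r) * X + C (c + b * r + a * r ^ 2) with hDqpdef
  have hNfac : Npoly q a b c d = (X - C r) * Nqp := by
    have h' : Npoly q a b c d = (X - C r) * Nqp
        + C (d ^ q * r ^ 3 + c ^ q * r ^ 2 + b ^ q * r + a ^ q) := by
      rw [hNqpdef]
      simp only [Npoly, map_add, map_mul, map_pow]
      ring
    rw [hNr, map_zero, add_zero] at h'
    exact h'
  have hDfac : Dpoly a b c d = (X - C r) * Dqp := by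
    have h' : Dpoly a b c d = (X - C r) * Dqp
        + C (a * r ^ 3 + b * r ^ 2 + c * r + d) := by
      rw [hDqpdef]
      simp only [Dpoly, map_add, map_mul, map_pow]
      ring
    rw [hDr, map_zero, add_zero] at h'
    exact h'
  have hGfull : G = (X - C r) * C (Hp.coeff 0) := by rw [hHp, ← hHpC]
  have hnumer : numer₀ q a b c d = C (Hp.coeff 0)⁻¹ * Nqp := by
    have hNeq : Npoly q a b c d = G * (C (Hp.coeff 0)⁻¹ * Nqp) := by
      rw [hGfull, hNfac]
      rw [show (X - C r) * C (Hp.coeff 0) * (C (Hp.coeff 0)⁻¹ * Nqp)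
        = (X - C r) * Nqp * (C (Hp.coeff 0) * C (Hp.coeff 0)⁻¹) from by ring]
      rw [← C_mul, mul_inv_cancel₀ hh0, C_1, mul_one]
    have hcancel := EuclideanDomain.mul_div_cancel' (a := Npoly q a b c d) (b := G)
      hGne (Dvd.intro _ hNeq.symm)
    show Npoly q a b c d / G = C (Hp.coeff 0)⁻¹ * Nqp
    have := hcancel.trans hNeq
    exact mul_left_cancel₀ hGne this
  have hdenom : denom₀ q a b c d = C (Hp.coeff 0)⁻¹ * Dqp := by
    have hDeq : Dpoly a b c d = G * (C (Hp.coeff 0)⁻¹ * Dqp) := by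
      rw [hGfull, hDfac]
      rw [show (X - C r) * C (Hp.coeff 0) * (C (Hp.coeff 0)⁻¹ * Dqp)
        = (X - C r) * Dqp * (C (Hp.coeff 0) * C (Hp.coeff 0)⁻¹) from by ring]
      rw [← C_mul, mul_inv_cancel₀ hh0, C_1, mul_one]
    have hcancel := EuclideanDomain.mul_div_cancel' (a := Dpoly a b c d) (b := G)
      hGne (Dvd.intro _ hDeq.symm)
    show Dpoly a b c d / G = C (Hp.coeff 0)⁻¹ * Dqp
    have := hcancel.trans hDeq
    exact mul_left_cancel₀ hGne this
  -- the reduced map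
  have feq : ∀ x : K, (numer₀ q a b c d).eval x * ((denom₀ q a b c d).eval x)⁻¹
      = Nqp.eval x * (Dqp.eval x)⁻¹ := by
    intro x
    rw [hnumer, hdenom]
    simp only [eval_mul, eval_C]
    rw [mul_inv_rev, inv_inv]
    rw [show (Hp.coeff 0)⁻¹ * Nqp.eval x * ((Dqp.eval x)⁻¹ * Hp.coeff 0)
      = ((Hp.coeff 0)⁻¹ * Hp.coeff 0) * (Nqp.eval x * (Dqp.eval x)⁻¹) from by ring]
    rw [inv_mul_cancel₀ hh0, one_mul]
  rw [show (fun x => (numer₀ q a b c d).eval x * ((denom₀ q a b c d).eval x)⁻¹)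
    = (fun x => Nqp.eval x * (Dqp.eval x)⁻¹) from funext feq] at hperm'
  have hNqeval : ∀ x : K, Nqp.eval x
      = d ^ q * x ^ 2 + (c ^ q + d ^ q * r) * x + (b ^ q + c ^ q * r + d ^ q * r ^ 2) := by
    intro x; rw [hNqpdef]; simp
  have hDqeval : ∀ x : K, Dqp.eval x
      = a * x ^ 2 + (b + a * r) * x + (c + b * r + a * r ^ 2) := by
    intro x; rw [hDqpdef]; simp
  -- mu facts
  have hmu0 : (0 : K) ∉ mu q K := by
    intro h
    have : (0 : K) ^ (q + 1) = 1 := h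
    rw [zero_pow hq10] at this
    exact zero_ne_one this
  have hDne : ∀ x : K, x ∈ mu q K → Dqp.eval x ≠ 0 := by
    intro x hx hzero
    have hmem := hperm'.1 hx
    simp only [hzero, inv_zero, mul_zero] at hmem
    exact hmu0 hmem
  -- find an element of order q+1
  obtain ⟨g, hg⟩ := IsCyclic.exists_generator (α := Kˣ)
  have hordg : orderOf g = q ^ 2 - 1 := by
    rw [orderOf_eq_card_of_forall_mem_zpowers hg, Nat.card_units,
      Nat.card_eq_fintype_card, hK]
  have hfacto : q ^ 2 - 1 = (q + 1) * (q - 1) := by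
    have h1q : 1 ≤ q := by omega
    have h1q2 : 1 ≤ q ^ 2 := Nat.one_le_pow _ _ (by omega)
    zify [h1q, h1q2]
    ring
  have hordz : orderOf (g ^ (q - 1)) = q + 1 := by
    rw [orderOf_pow, hordg, hfacto]
    have hgcd : Nat.gcd ((q + 1) * (q - 1)) (q - 1) = q - 1 :=
      Nat.gcd_eq_right ⟨q + 1, by ring⟩
    rw [hgcd, Nat.mul_div_cancel _ (by omega : 0 < q - 1)]
  set z : K := ((g ^ (q - 1) : Kˣ) : K) with hzdef
  have hz0 : z ≠ 0 := Units.ne_zero _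
  have hzmu : z ^ (q + 1) = 1 := by
    have h' := pow_orderOf_eq_one (g ^ (q - 1))
    rw [hordz] at h'
    have := congrArg (Units.val) h'
    rw [Units.val_pow_eq_pow_val, Units.val_one] at this
    exact this
  have hz1 : z ≠ 1 := by
    intro h
    have : (g ^ (q - 1) : Kˣ) = 1 := Units.val_eq_one.mp h
    have := orderOf_eq_one_iff.mpr this
    omega
  have hz2 : z ^ 2 ≠ 1 := by
    intro h
    have h' : (g ^ (q - 1) : Kˣ) ^ 2 = 1 := by
      apply Units.val_eq_one.mp
      rw [Units.val_pow_eq_pow_val]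
      exact h
    have hdvd := orderOf_dvd_of_pow_eq_one h'
    rw [hordz] at hdvd
    have := Nat.le_of_dvd (by norm_num) hdvd
    omega
  have hz2mu : (z ^ 2) ^ (q + 1) = 1 := by
    rw [← pow_mul, mul_comm, pow_mul, hzmu, one_pow]
  have h1mu : (1 : K) ∈ mu q K := by
    show (1 : K) ^ (q + 1) = 1
    rw [one_pow]
  have hzmu' : z ∈ mu q K := hzmu
  have hz2mu' : z ^ 2 ∈ mu q K := hz2mu
  have hzz2 : z ≠ z ^ 2 := by
    intro h
    apply hz1
    have : z * 1 = z * z := by rw [mul_one]; rw [pow_two] at h; exact h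
    exact (mul_left_cancel₀ hz0 this).symm
  -- choose a good value y
  obtain ⟨y, hymu, hy1, hy2⟩ : ∃ y : K, y ∈ mu q K ∧ y ≠ a ^ q * d⁻¹
      ∧ y ≠ (c ^ q + d ^ q * r) * (b + a * r)⁻¹ := by
    by_contra hcon
    push_neg at hcon
    have hch : ∀ t : K, t ∈ mu q K → t = a ^ q * d⁻¹
        ∨ t = (c ^ q + d ^ q * r) * (b + a * r)⁻¹ := by
      intro t ht
      by_cases h : t = a ^ q * d⁻¹
      · exact Or.inl h
      · exact Or.inr (hcon t ht h)
    rcases hch 1 h1mu with c1 | c1 <;> rcases hch z hzmu' with c2 | c2 <;>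
      rcases hch (z ^ 2) hz2mu' with c3 | c3
    · exact hz1 (c2.trans c1.symm)
    · exact hz1 (c2.trans c1.symm)
    · exact hz2 (c3.trans c1.symm)
    · exact hzz2 (c2.trans c3.symm)
    · exact hzz2 (c2.trans c3.symm)
    · exact hz2 (c3.trans c1.symm)
    · exact hz1 (c2.trans c1.symm)
    · exact hz1 (c2.trans c1.symm)
  have hy0 : y ≠ 0 := by
    intro h; rw [h] at hymu; exact hmu0 hymu
  have hymu1 : y ^ (q + 1) = 1 := hymu
  -- get the preimage u of y
  obtain ⟨u, humu, hFu⟩ := hperm'.2.2 hymu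
  have humu1 : u ^ (q + 1) = 1 := humu
  have hu0 : u ≠ 0 := by
    intro h; rw [h] at humu; exact hmu0 humu
  have hDqu : Dqp.eval u ≠ 0 := hDne u humu
  have hNu : Nqp.eval u = y * Dqp.eval u := by
    have h' : Nqp.eval u * (Dqp.eval u)⁻¹ = y := hFu
    field_simp at h'
    rw [mul_comm] at h'
    exact h'
  have hNu' : d ^ q * u ^ 2 + (c ^ q + d ^ q * r) * u + (b ^ q + c ^ q * r + d ^ q * r ^ 2)
      = y * (a * u ^ 2 + (b + a * r) * u + (c + b * r + a * r ^ 2)) := by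
    rw [← hNqeval, ← hDqeval]; exact hNu
  -- the quadratic coefficients
  set p2 : K := d ^ q - y * a with hp2def
  set p1 : K := (c ^ q + d ^ q * r) - y * (b + a * r) with hp1def
  set p0 : K := (b ^ q + c ^ q * r + d ^ q * r ^ 2) - y * (c + b * r + a * r ^ 2) with hp0def
  have hPu : p2 * u ^ 2 + p1 * u + p0 = 0 := by
    rw [hp2def, hp1def, hp0def]; linear_combination hNu'
  have hp2ne : p2 ≠ 0 := by
    rw [hp2def]
    intro h
    apply hy1
    have hyda : (y * d) * a = (a ^ q) * a := by linear_combination (-d) * h + h3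
    have hyd : y * d = a ^ q := mul_right_cancel₀ ha hyda
    rw [eq_mul_inv_iff_mul_eq₀ hd]
    exact hyd
  have hrp0 : r * p0 = y * d - a ^ q := by
    rw [hp0def]; linear_combination hNr - y * hDr
  have hp0ne : p0 ≠ 0 := by
    intro h
    apply hy1
    rw [h, mul_zero] at hrp0
    have hyd : y * d = a ^ q := by linear_combination -hrp0
    rw [eq_mul_inv_iff_mul_eq₀ hd]
    exact hyd
  have hp1ne : p1 ≠ 0 := by
    by_cases hb1 : b + a * r = 0
    · have hn1 : c ^ q + d ^ q * r ≠ 0 := by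
        intro hn
        apply hBne
        linear_combination (d ^ q) * hb1 - a * hn
      rw [hp1def, hb1, mul_zero, sub_zero]
      exact hn1
    · rw [hp1def]
      intro h
      apply hy2
      rw [eq_mul_inv_iff_mul_eq₀ hb1]
      linear_combination -h
  -- the other root v of the quadratic
  set v : K := p0 * (p2 * u)⁻¹ with hvdef
  have hpuv : p2 * u * v = p0 := by
    rw [hvdef, mul_comm p0 _, ← mul_assoc, mul_inv_cancel₀ (mul_ne_zero hp2ne hu0), one_mul]
  have hv0 : v ≠ 0 := by
    rw [hvdef]
    exact mul_ne_zero hp0ne (inv_ne_zero (mul_ne_zero hp2ne hu0))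
  have hvu : v ≠ u := by
    intro h
    rw [h] at hpuv
    have hp1u : p1 * u = 0 := by linear_combination hPu - hpuv - p0 * htwo
    rcases mul_eq_zero.mp hp1u with h' | h'
    · exact hp1ne h'
    · exact hu0 h'
  have hPv : p2 * v ^ 2 + p1 * v + p0 = 0 := by
    have h8 : u * (p2 * v ^ 2 + p1 * v + p0) = 0 := by
      linear_combination v * hPu + (v - u) * hpuv
    rcases mul_eq_zero.mp h8 with h' | h'
    · exact absurd h' hu0
    · exact h'
  have hPv' : d ^ q * v ^ 2 + (c ^ q + d ^ q * r) * v + (b ^ q + c ^ q * r + d ^ q * r ^ 2)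
      - y * (a * v ^ 2 + (b + a * r) * v + (c + b * r + a * r ^ 2)) = 0 := by
    rw [hp2def, hp1def, hp0def] at hPv
    linear_combination hPv
  have hp1f : p1 + p2 * (u + v) = 0 := by
    have h9 : u * (p1 + p2 * (u + v)) = u * 0 := by
      rw [mul_zero]
      linear_combination hPu + hpuv
    exact mul_left_cancel₀ hu0 h9
  -- v is not in mu
  have hvnotmu : v ^ (q + 1) ≠ 1 := by
    intro hvmu
    have hvmem : v ∈ mu q K := hvmu
    have hDqv := hDne v hvmem
    have hFv : Nqp.eval v * (Dqp.eval v)⁻¹ = y := by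
      have hNv : Nqp.eval v = y * Dqp.eval v := by
        rw [hNqeval, hDqeval]
        linear_combination hPv'
      rw [hNv, mul_assoc, mul_inv_cancel₀ hDqv, mul_one]
    have := hperm'.2.1 hvmem humu (hFv.trans hFu.symm)
    exact hvu this
  -- Frobenius dream for cubics
  have hdream : ∀ A B2 C2 D2 x : K, (A * x ^ 3 + B2 * x ^ 2 + C2 * x + D2) ^ q
      = A ^ q * (x ^ q) ^ 3 + B2 ^ q * (x ^ q) ^ 2 + C2 ^ q * x ^ q + D2 ^ q := by
    intro A B2 C2 D2 x
    rw [frob, frob, frob, mul_pow, mul_pow, mul_pow, ← pow_mul, ← pow_mul,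
      show 3 * q = q * 3 from mul_comm 3 q, show 2 * q = q * 2 from mul_comm 2 q,
      pow_mul, pow_mul]
  -- the conjugate point w = (v^q)⁻¹
  have hvq0 : v ^ q ≠ 0 := pow_ne_zero _ hv0
  set w : K := (v ^ q)⁻¹ with hwdef
  have hw1 : v ^ q * w = 1 := by rw [hwdef, mul_inv_cancel₀ hvq0]
  have hnvydv : d ^ q * v ^ 3 + c ^ q * v ^ 2 + b ^ q * v + a ^ q
      = y * (a * v ^ 3 + b * v ^ 2 + c * v + d) := by
    linear_combination (v - r) * hPv' + hNr - y * hDr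
  have e1 : (v ^ q) ^ 3 * (d ^ q * w ^ 3 + c ^ q * w ^ 2 + b ^ q * w + a ^ q)
      = a ^ q * (v ^ q) ^ 3 + b ^ q * (v ^ q) ^ 2 + c ^ q * v ^ q + d ^ q := by
    linear_combination (d ^ q * ((v ^ q) ^ 2 * w ^ 2 + v ^ q * w + 1)
      + c ^ q * v ^ q * (v ^ q * w + 1) + b ^ q * (v ^ q) ^ 2) * hw1
  have e1' : a ^ q * (v ^ q) ^ 3 + b ^ q * (v ^ q) ^ 2 + c ^ q * v ^ q + d ^ q
      = (a * v ^ 3 + b * v ^ 2 + c * v + d) ^ q := (hdream a b c d v).symm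
  have e2 : (v ^ q) ^ 3 * (a * w ^ 3 + b * w ^ 2 + c * w + d)
      = d * (v ^ q) ^ 3 + c * (v ^ q) ^ 2 + b * v ^ q + a := by
    linear_combination (a * ((v ^ q) ^ 2 * w ^ 2 + v ^ q * w + 1)
      + b * v ^ q * (v ^ q * w + 1) + c * (v ^ q) ^ 2) * hw1
  have e2' : d * (v ^ q) ^ 3 + c * (v ^ q) ^ 2 + b * v ^ q + a
      = (d ^ q * v ^ 3 + c ^ q * v ^ 2 + b ^ q * v + a ^ q) ^ q := by
    rw [hdream (d ^ q) (c ^ q) (b ^ q) (a ^ q) v, hfr2 a, hfr2 b, hfr2 c, hfr2 d]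
  have h11 : (v ^ q) ^ 3 * ((d ^ q * w ^ 3 + c ^ q * w ^ 2 + b ^ q * w + a ^ q)
      - y * (a * w ^ 3 + b * w ^ 2 + c * w + d))
      = (a * v ^ 3 + b * v ^ 2 + c * v + d) ^ q
        - y * (d ^ q * v ^ 3 + c ^ q * v ^ 2 + b ^ q * v + a ^ q) ^ q := by
    linear_combination e1 + e1' - y * e2 - y * e2'
  have hNvq : (d ^ q * v ^ 3 + c ^ q * v ^ 2 + b ^ q * v + a ^ q) ^ q
      = y ^ q * (a * v ^ 3 + b * v ^ 2 + c * v + d) ^ q := by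
    rw [hnvydv, mul_pow]
  have hyq1 : y ^ q * y = 1 := by rw [← pow_succ]; exact hymu1
  have h12 : (v ^ q) ^ 3 * ((d ^ q * w ^ 3 + c ^ q * w ^ 2 + b ^ q * w + a ^ q)
      - y * (a * w ^ 3 + b * w ^ 2 + c * w + d)) = 0 := by
    rw [h11, hNvq]
    linear_combination (-((a * v ^ 3 + b * v ^ 2 + c * v + d) ^ q)) * hyq1
  have h13 : (d ^ q * w ^ 3 + c ^ q * w ^ 2 + b ^ q * w + a ^ q)
      - y * (a * w ^ 3 + b * w ^ 2 + c * w + d) = 0 := by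
    rcases mul_eq_zero.mp h12 with h' | h'
    · exact absurd h' (pow_ne_zero 3 hvq0)
    · exact h'
  have step1 : (d ^ q * w ^ 3 + c ^ q * w ^ 2 + b ^ q * w + a ^ q)
      - y * (a * w ^ 3 + b * w ^ 2 + c * w + d)
      = (w - r) * (p2 * w ^ 2 + p1 * w + p0) := by
    rw [hp2def, hp1def, hp0def]
    linear_combination hNr - y * hDr
  have step2 : p2 * w ^ 2 + p1 * w + p0 = p2 * ((w - u) * (w - v)) := by
    linear_combination w * hp1f - hpuv
  have hfin : (w - r) * (p2 * ((w - u) * (w - v))) = 0 := by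
    rw [← step2, ← step1]
    exact h13
  -- final case analysis
  have hvq_eq : ∀ t : K, v ^ q = t ^ q → v = t := by
    intro t h
    have : (v ^ q) ^ q = (t ^ q) ^ q := by rw [h]
    rwa [hfr2, hfr2] at this
  rcases mul_eq_zero.mp hfin with hcase | hcase
  · -- w = r
    have hwr : w = r := by linear_combination hcase
    have hvq : v ^ q = r ^ q := by
      have hrinv : r ^ q = r⁻¹ := by
        have : r ^ q * r = 1 := by rw [← pow_succ]; exact hrmu
        field_simp at this ⊢
        linear_combination this
      have : v ^ q = w⁻¹ := by rw [hwdef, inv_inv]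
      rw [this, hwr, ← hrinv]
    have hvr : v = r := hvq_eq r hvq
    apply hvnotmu
    rw [hvr]
    exact hrmu
  · rcases mul_eq_zero.mp hcase with hcase' | hcase'
    · exact hp2ne hcase'
    · rcases mul_eq_zero.mp hcase' with hc | hc
      · -- w = u
        have hwu : w = u := by linear_combination hc
        have hvq : v ^ q = u ^ q := by
          have huinv : u ^ q = u⁻¹ := by
            have : u ^ q * u = 1 := by rw [← pow_succ]; exact humu1
            field_simp at this ⊢
            linear_combination this
          have : v ^ q = w⁻¹ := by rw [hwdef, inv_inv]
          rw [this, hwu, ← huinv]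
        exact hvu (hvq_eq u hvq)
      · -- w = v
        have hwv : w = v := by linear_combination hc
        apply hvnotmu
        rw [pow_succ]
        calc v ^ q * v = v ^ q * w := by rw [hwv]
        _ = 1 := hw1
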